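/- Let γ_k ∈ (0,1] for all k, s > 0, and u₀ ∈ H_{δ^{(s)}} where δ_k^{(s)} = (1+k²)^{s+1}/γ_k^s. Then the solution of the linear damped BBM equation satisfies ‖u(t)‖_{H¹}² ≤ min( e^{−s}(s/(2t))^s |u₀|_{δ^{(s)}}², ‖u₀‖_{H¹}² ) for all t > 0. -/

import Mathlib

lemma keyineq (s : ℝ) (hs : 0 < s) (x : ℝ) (hx : 0 < x) :
    x ^ s * Real.exp (-x) ≤ s ^ s * Real.exp (-s) := by
  rw [Real.rpow_def_of_pos hx, Real.rpow_def_of_pos hs, ← Real.exp_add, ← Real.exp_add,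
    Real.exp_le_exp]
  have h := Real.log_le_sub_one_of_pos (show 0 < x / s by positivity)
  rw [Real.log_div (ne_of_gt hx) (ne_of_gt hs)] at h
  have h2 := mul_le_mul_of_nonneg_left h hs.le
  have h3 : s * (x / s) = x := by field_simp
  nlinarith

lemma normexp (γ : ℝ) (k : ℤ) (t : ℝ) :
    ‖Complex.exp (-(((γ : ℂ) + Complex.I * (k : ℂ)) / (1 + (k : ℂ) ^ 2)) * t)‖
      = Real.exp (-(γ / (1 + (k:ℝ)^2)) * t) := by
  have hp : (0:ℝ) < 1 + (k:ℝ)^2 := by positivity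
  have hden : (1 + (k:ℂ)^2) = ((1 + (k:ℝ)^2 : ℝ) : ℂ) := by push_cast; ring
  rw [Complex.norm_exp]
  congr 1
  rw [hden]
  have hne : ((1 + (k:ℝ)^2 : ℝ) : ℂ) ≠ 0 := by
    exact_mod_cast Complex.ofReal_ne_zero.mpr (ne_of_gt hp)
  have : -(((γ : ℂ) + Complex.I * (k : ℂ)) / ((1 + (k:ℝ)^2 : ℝ) : ℂ)) * (t:ℂ)
      = ((-(γ / (1 + (k:ℝ)^2)) * t : ℝ) : ℂ) + Complex.I * ((-(k / (1 + (k:ℝ)^2)) * t : ℝ) : ℂ) := by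
    push_cast at hne ⊢
    field_simp
    ring
  rw [this]
  simp only [Complex.add_re, Complex.mul_re, Complex.I_re, Complex.I_im, Complex.ofReal_re,
    Complex.ofReal_im]
  ring

/-- With `γ k ∈ (0,1]`, `s > 0` and `u₀ ∈ H_{δ⁽ˢ⁾}`,
`δ⁽ˢ⁾ k = (1+k²)^{s+1}/γ k ^ s`, the mode-wise solution of linear damped BBM satisfies
`‖u(t)‖_{H¹}² ≤ min(e^{-s} (s/(2t))^s |u₀|_{δ⁽ˢ⁾}², ‖u₀‖_{H¹}²)` for all `t > 0`. -/
theorem stmt8 (γ : ℤ → ℝ) (hγ : ∀ k, 0 < γ k) (hγ1 : ∀ k, γ k ≤ 1) (s : ℝ) (hs : 0 < s)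
    (u : ℝ → ℤ → ℂ) (u₀ : ℤ → ℂ)
    (hsol : ∀ t k, u t k =
      Complex.exp (-(((γ k : ℂ) + Complex.I * (k : ℂ)) / (1 + (k : ℂ) ^ 2)) * t) * u₀ k)
    (hδ : Summable fun k : ℤ => ((1 + (k : ℝ) ^ 2) ^ (s + 1) / γ k ^ s) * ‖u₀ k‖ ^ 2)
    (hH1 : Summable fun k : ℤ => (1 + (k : ℝ) ^ 2) * ‖u₀ k‖ ^ 2) :
    ∀ t > 0, (∑' k : ℤ, (1 + (k : ℝ) ^ 2) * ‖u t k‖ ^ 2) ≤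
      min (Real.exp (-s) * (s / (2 * t)) ^ s *
          ∑' k : ℤ, ((1 + (k : ℝ) ^ 2) ^ (s + 1) / γ k ^ s) * ‖u₀ k‖ ^ 2)
        (∑' k : ℤ, (1 + (k : ℝ) ^ 2) * ‖u₀ k‖ ^ 2) := by
  intro t ht
  have hp : ∀ k : ℤ, (0:ℝ) < 1 + (k:ℝ)^2 := fun k => by positivity
  -- mode-wise norm
  have hnorm2 : ∀ k, ‖u t k‖^2
      = Real.exp (-(2 * (γ k / (1 + (k:ℝ)^2)) * t)) * ‖u₀ k‖^2 := by
    intro k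
    rw [hsol, norm_mul, mul_pow, normexp]
    congr 1
    rw [sq, ← Real.exp_add]
    ring_nf
  -- bound B : termwise ≤ (1+k²)‖u₀ k‖²
  have hboundB : ∀ k : ℤ, (1 + (k:ℝ)^2) * ‖u t k‖^2 ≤ (1 + (k:ℝ)^2) * ‖u₀ k‖^2 := by
    intro k
    rw [hnorm2 k]
    have hexp : Real.exp (-(2 * (γ k / (1 + (k:ℝ)^2)) * t)) ≤ 1 := by
      apply Real.exp_le_one_iff.mpr
      have : 0 < 2 * (γ k / (1 + (k:ℝ)^2)) * t := by
        have := hγ k; have := hp k; positivity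
      linarith
    exact mul_le_mul_of_nonneg_left (mul_le_of_le_one_left (sq_nonneg _) hexp) (hp k).le
  -- summability of LHS
  have hgnn : ∀ k : ℤ, 0 ≤ (1 + (k:ℝ)^2) * ‖u t k‖^2 := fun k => by positivity
  have hgsum : Summable fun k : ℤ => (1 + (k:ℝ)^2) * ‖u t k‖^2 :=
    Summable.of_nonneg_of_le hgnn hboundB hH1
  -- bound A : termwise ≤ e * δ k * ‖u₀ k‖²
  set e : ℝ := Real.exp (-s) * (s / (2 * t)) ^ s with he
  have hboundA : ∀ k : ℤ, (1 + (k:ℝ)^2) * ‖u t k‖^2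
      ≤ e * (((1 + (k:ℝ)^2) ^ (s+1) / γ k ^ s) * ‖u₀ k‖^2) := by
    intro k
    set A : ℝ := 1 + (k:ℝ)^2 with hA
    have hAp : 0 < A := hp k
    have hG : 0 < γ k := hγ k
    have hx : 0 < 2 * (γ k / A) * t := by positivity
    have hk := keyineq s hs _ hx
    have hxs : 0 < (2 * (γ k / A) * t) ^ s := Real.rpow_pos_of_pos hx s
    have h1 : Real.exp (-(2 * (γ k / A) * t)) ≤ s ^ s * Real.exp (-s) / (2 * (γ k / A) * t) ^ s := by
      rw [le_div_iff₀ hxs]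
      linarith [hk]
    have e1 : (2 * (γ k / A) * t) ^ s = (2*t) ^ s * (γ k ^ s / A ^ s) := by
      rw [show 2 * (γ k / A) * t = (2*t) * (γ k / A) by ring,
        Real.mul_rpow (by positivity) (by positivity), Real.div_rpow hG.le hAp.le]
    have h2 : s ^ s * Real.exp (-s) / (2 * (γ k / A) * t) ^ s
        = e * (A ^ s / γ k ^ s) := by
      have e2 : (s / (2*t)) ^ s = s ^ s / (2*t) ^ s := by rw [Real.div_rpow hs.le (by positivity : (0:ℝ) ≤ 2*t)]
      rw [e1, he, e2]
      have n1 : ((2*t):ℝ) ^ s ≠ 0 := ne_of_gt (Real.rpow_pos_of_pos (by positivity) s)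
      have n2 : (γ k) ^ s ≠ 0 := ne_of_gt (Real.rpow_pos_of_pos hG s)
      have n3 : A ^ s ≠ 0 := ne_of_gt (Real.rpow_pos_of_pos hAp s)
      rw [div_eq_iff (by positivity : (2*t:ℝ) ^ s * (γ k ^ s / A ^ s) ≠ 0)]
      field_simp
    have h3 : Real.exp (-(2 * (γ k / A) * t)) ≤ e * (A ^ s / γ k ^ s) := h2 ▸ h1
    rw [hnorm2 k]
    have h4 : A * (Real.exp (-(2 * (γ k / A) * t)) * ‖u₀ k‖^2)
        ≤ A * ((e * (A ^ s / γ k ^ s)) * ‖u₀ k‖^2) := by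
      apply mul_le_mul_of_nonneg_left _ hAp.le
      apply mul_le_mul_of_nonneg_right h3 (sq_nonneg _)
    refine le_trans h4 (le_of_eq ?_)
    have hApow : A ^ (s+1) = A ^ s * A := by
      rw [Real.rpow_add hAp, Real.rpow_one]
    rw [hApow]
    field_simp
  -- conclude
  apply le_min
  · calc (∑' k : ℤ, (1 + (k:ℝ)^2) * ‖u t k‖^2)
        ≤ ∑' k : ℤ, e * (((1 + (k:ℝ)^2) ^ (s+1) / γ k ^ s) * ‖u₀ k‖^2) :=
          Summable.tsum_le_tsum hboundA hgsum (hδ.mul_left e)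
      _ = e * ∑' k : ℤ, ((1 + (k:ℝ)^2) ^ (s+1) / γ k ^ s) * ‖u₀ k‖^2 := tsum_mul_left
  · exact Summable.tsum_le_tsum hboundB hgsum hH1
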